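/- arXiv:1004.2159 — 4 statements merged into one kernel-verified Lean document; each statement's English description precedes it below -/
import Mathlib

section
/- Let F be a field, n a natural number, and Q a set of polynomials in the commutative polynomial ring F[x_1,...,x_n]. Then Q has no common root a in F^n with every coordinate a_i in {0,1} if and only if the constant polynomial 1 belongs to the ideal of F[x_1,...,x_n] generated by Q together with the Boolean axioms x_i^2 - x_i for i = 1,...,n. -/
open MvPolynomial

private lemma pc_complete (F : Type*) [Field F] :
    ∀ n (Q : Set (MvPolynomial (Fin n) F)),
      (1 : MvPolynomial (Fin n) F) ∉
        Ideal.span (Q ∪ Set.range (fun i : Fin n => X i ^ 2 - X i)) →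
      ∃ a : Fin n → F, (∀ i, a i = 0 ∨ a i = 1) ∧ ∀ q ∈ Q, eval a q = 0 := by
  intro n
  induction n with
  | zero =>
    intro Q h1
    refine ⟨Fin.elim0, fun i => i.elim0, fun q hq => ?_⟩
    by_contra hc
    obtain ⟨c, rfl⟩ := MvPolynomial.C_surjective (Fin 0) q
    apply h1
    have hc' : c ≠ 0 := by simpa using hc
    have he : (1 : MvPolynomial (Fin 0) F) = C c⁻¹ * C c := by
      rw [← C_mul, inv_mul_cancel₀ hc', C_1]
    rw [he]
    exact Ideal.mul_mem_left _ _ (Ideal.subset_span (Or.inl hq))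
  | succ n ih =>
    intro Q h1
    set I : Ideal (MvPolynomial (Fin (n + 1)) F) :=
      Ideal.span (Q ∪ Set.range (fun i : Fin (n + 1) => X i ^ 2 - X i)) with hI
    -- the substitution x₀ ↦ b
    let sub : F → (MvPolynomial (Fin (n + 1)) F →ₐ[F] MvPolynomial (Fin n) F) :=
      fun b => aeval (Fin.cases (C b) X)
    -- the embedding shifting variables
    let emb : MvPolynomial (Fin n) F →ₐ[F] MvPolynomial (Fin (n + 1)) F :=
      rename Fin.succ
    -- Lemma A : p ≡ emb (sub b p)  mod (X 0 - C b)
    have lemA : ∀ (b : F) (p : MvPolynomial (Fin (n + 1)) F),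
        p - emb (sub b p) ∈ Ideal.span {(X 0 - C b : MvPolynomial (Fin (n + 1)) F)} := by
      intro b p
      set J : Ideal (MvPolynomial (Fin (n + 1)) F) := Ideal.span {(X 0 - C b)} with hJ
      have hXb : Ideal.Quotient.mk J (X 0) = Ideal.Quotient.mk J (C b) := by
        rw [Ideal.Quotient.mk_eq_mk_iff_sub_mem]
        exact Ideal.subset_span rfl
      have hcomp : (Ideal.Quotient.mkₐ F J).comp (emb.comp (sub b)) =
          Ideal.Quotient.mkₐ F J := by
        apply MvPolynomial.algHom_ext
        intro i
        refine Fin.cases ?_ ?_ i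
        · simp [sub, emb, hXb]
        · intro j
          simp [sub, emb]
      have := congrArg (fun f => f p) hcomp  -- mk (emb (sub b p)) = mk p
      simp only [AlgHom.comp_apply, Ideal.Quotient.mkₐ_eq_mk] at this
      rw [← Ideal.Quotient.mk_eq_mk_iff_sub_mem]
      exact this.symm
    -- Key : if 1 is in the span of the substituted system, then 1 ∈ I + (X 0 - C b)
    have key : ∀ b : F,
        (1 : MvPolynomial (Fin n) F) ∈
          Ideal.span ((sub b) '' Q ∪ Set.range (fun i : Fin n => X i ^ 2 - X i)) →
        ∃ f : MvPolynomial (Fin (n + 1)) F, 1 - f * (X 0 - C b) ∈ I := by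
      intro b hb
      have h1m : (1 : MvPolynomial (Fin (n + 1)) F) ∈
          Ideal.span (emb '' ((sub b) '' Q ∪ Set.range (fun i : Fin n => X i ^ 2 - X i))) := by
        have h2 := Ideal.mem_map_of_mem (emb.toRingHom) hb
        rw [Ideal.map_span] at h2
        simpa using h2
      set J : Ideal (MvPolynomial (Fin (n + 1)) F) := Ideal.span {(X 0 - C b)} with hJ
      have hle : Ideal.span (emb '' ((sub b) '' Q ∪
          Set.range (fun i : Fin n => X i ^ 2 - X i))) ≤ I ⊔ J := by
        rw [Ideal.span_le]
        rintro x ⟨y, hy, rfl⟩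
        rcases hy with ⟨q, hq, rfl⟩ | ⟨i, rfl⟩
        · -- emb (sub b q) = q - (q - emb (sub b q))
          have hqI : q ∈ I ⊔ J :=
            Ideal.mem_sup_left (Ideal.subset_span (Or.inl hq))
          have hdJ : q - emb (sub b q) ∈ I ⊔ J := Ideal.mem_sup_right (lemA b q)
          have : emb (sub b q) = q - (q - emb (sub b q)) := by ring
          rw [this]
          exact Submodule.sub_mem _ hqI hdJ
        · refine Ideal.mem_sup_left (Ideal.subset_span (Or.inr ⟨i.succ, ?_⟩))
          simp [emb]
      have h1sup : (1 : MvPolynomial (Fin (n + 1)) F) ∈ I ⊔ J := hle h1m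
      rw [Submodule.mem_sup] at h1sup
      obtain ⟨y, hy, z, hz, hyz⟩ := h1sup
      rw [hJ, Ideal.mem_span_singleton'] at hz
      obtain ⟨f, rfl⟩ := hz
      exact ⟨f, by rwa [show (1 : MvPolynomial (Fin (n + 1)) F) - f * (X 0 - C b) = y by
        rw [← hyz]; ring]⟩
    -- At least one of the two substituted systems is consistent
    have hbool : ∃ b : F, (b = 0 ∨ b = 1) ∧
        (1 : MvPolynomial (Fin n) F) ∉
          Ideal.span ((sub b) '' Q ∪ Set.range (fun i : Fin n => X i ^ 2 - X i)) := by
      by_contra hcon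
      push_neg at hcon
      obtain ⟨f0, hf0⟩ := key 0 (hcon 0 (Or.inl rfl))
      obtain ⟨f1, hf1⟩ := key 1 (hcon 1 (Or.inr rfl))
      apply h1
      have hax : (X 0 ^ 2 - X 0 : MvPolynomial (Fin (n + 1)) F) ∈ I :=
        Ideal.subset_span (Or.inr ⟨0, rfl⟩)
      have hdecomp : (1 : MvPolynomial (Fin (n + 1)) F) =
          (1 - f0 * (X 0 - C 0)) * (1 - f1 * (X 0 - C 1)) +
          (f1 * (X 0 - C 1)) * (1 - f0 * (X 0 - C 0)) +
          (f0 * (X 0 - C 0)) * (1 - f1 * (X 0 - C 1)) +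
          (f0 * f1) * (X 0 ^ 2 - X 0) := by
        rw [map_zero, map_one]; ring
      rw [hdecomp]
      exact Submodule.add_mem _ (Submodule.add_mem _ (Submodule.add_mem _
        (Ideal.mul_mem_right _ _ hf0) (Ideal.mul_mem_left _ _ hf0))
        (Ideal.mul_mem_left _ _ hf1)) (Ideal.mul_mem_left _ _ hax)
    obtain ⟨b, hb01, hbmem⟩ := hbool
    obtain ⟨a, ha01, haQ⟩ := ih _ hbmem
    refine ⟨Fin.cases b a, ?_, ?_⟩
    · intro i
      refine Fin.cases ?_ ?_ i
      · simpa using hb01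
      · intro j; simpa using ha01 j
    · intro q hq
      have heval : eval (Fin.cases b a : Fin (n + 1) → F) q = eval a (sub b q) := by
        have hre : (eval a).comp ((sub b) : MvPolynomial (Fin (n + 1)) F →+* MvPolynomial (Fin n) F)
            = eval (Fin.cases b a : Fin (n + 1) → F) := by
          apply MvPolynomial.ringHom_ext
          · intro r; simp [sub]
          · intro i
            refine Fin.cases ?_ ?_ i
            · simp [sub]
            · intro j; simp [sub]
        exact (congrArg (fun f => f q) hre).symm
      rw [heval]
      exact haQ _ ⟨q, hq, rfl⟩

/-- Soundness and completeness of polynomial calculus: a set `Q` of commutative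
polynomials has no common `{0,1}`-root over the field `F` iff `1` lies in the ideal
generated by `Q` together with the Boolean axioms `x_i^2 - x_i`. -/
theorem pc_sound_complete (F : Type*) [Field F] (n : ℕ)
    (Q : Set (MvPolynomial (Fin n) F)) :
    (¬ ∃ a : Fin n → F, (∀ i, a i = 0 ∨ a i = 1) ∧ ∀ q ∈ Q, eval a q = 0) ↔
      (1 : MvPolynomial (Fin n) F) ∈
        Ideal.span (Q ∪ Set.range (fun i : Fin n => X i ^ 2 - X i)) := by
  constructor
  · intro h
    by_contra hmem
    exact h (pc_complete F n Q hmem)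
  · rintro hmem ⟨a, ha01, haQ⟩
    have hle : Ideal.span (Q ∪ Set.range (fun i : Fin n => X i ^ 2 - X i)) ≤
        RingHom.ker (eval a) := by
      rw [Ideal.span_le]
      rintro x (hx | ⟨i, rfl⟩)
      · exact haQ x hx
      · simp only [RingHom.mem_ker, map_sub, map_pow, eval_X, SetLike.mem_coe]
        rcases ha01 i with h | h <;> rw [h] <;> ring
    have := hle hmem
    simp [RingHom.mem_ker] at this
end

section
/- Let F be a field and let Q be a set of noncommutative polynomials in the free associative F-algebra on generators x_1,...,x_n. If there is no assignment e : {1,...,n} -> F with every e_i in {0,1} such that evaluating each q in Q at e (via the F-algebra homomorphism to F sending x_i to e_i) gives 0, then 1 belongs to the two-sided ideal of the free algebra generated by Q together with the Boolean axioms x_i*(1 - x_i) for all i and the commutator axioms x_i*x_j - x_j*x_i for all i != j. -/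
section Aux
variable {F : Type*} [Field F] {n : ℕ}

lemma nfpc_aux_comm (S : Set (FreeAlgebra F (Fin n)))
    (hS : ∀ i j : Fin n,
      FreeAlgebra.ι F i * FreeAlgebra.ι F j - FreeAlgebra.ι F j * FreeAlgebra.ι F i
        ∈ TwoSidedIdeal.span S) :
    ∀ x y : FreeAlgebra F (Fin n), x * y - y * x ∈ TwoSidedIdeal.span S := by
  set I := TwoSidedIdeal.span S with hI
  have base : ∀ (j : Fin n) (y : FreeAlgebra F (Fin n)),
      FreeAlgebra.ι F j * y - y * FreeAlgebra.ι F j ∈ I := by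
    intro j y
    induction y with
    | grade0 r =>
        rw [Algebra.commutes r (FreeAlgebra.ι F j), sub_self]; exact I.zero_mem
    | grade1 k => exact hS j k
    | mul a b ha hb =>
        have := I.add_mem (I.mul_mem_right _ b ha) (I.mul_mem_left a _ hb)
        convert this using 1; noncomm_ring
    | add a b ha hb =>
        have := I.add_mem ha hb
        convert this using 1; noncomm_ring
  intro x y
  induction x with
  | grade0 r => rw [Algebra.commutes r y, sub_self]; exact I.zero_mem
  | grade1 j => exact base j y
  | mul a b ha hb =>
      have := I.add_mem (I.mul_mem_left a _ hb) (I.mul_mem_right _ b ha)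
      convert this using 1; noncomm_ring
  | add a b ha hb =>
      have := I.add_mem ha hb
      convert this using 1; noncomm_ring

/-- Anything in the kernel of the abelianization map lies in any two-sided ideal
containing all commutators of generators. -/
lemma nfpc_aux_ker (S : Set (FreeAlgebra F (Fin n)))
    (hS : ∀ i j : Fin n,
      FreeAlgebra.ι F i * FreeAlgebra.ι F j - FreeAlgebra.ι F j * FreeAlgebra.ι F i
        ∈ TwoSidedIdeal.span S)
    (x : FreeAlgebra F (Fin n))
    (hx : FreeAlgebra.lift F (MvPolynomial.X : Fin n → MvPolynomial (Fin n) F) x = 0) :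
    x ∈ TwoSidedIdeal.span S := by
  set I := TwoSidedIdeal.span S with hI
  set c := I.ringCon with hc
  letI : CommRing c.Quotient :=
    { (inferInstance : Ring c.Quotient) with
      mul_comm := by
        intro a b
        obtain ⟨a, rfl⟩ := Quotient.mk''_surjective a
        obtain ⟨b, rfl⟩ := Quotient.mk''_surjective b
        show c.mk' (a * b) = c.mk' (b * a)
        have : c (a * b) (b * a) := by
          rw [I.rel_iff]; exact nfpc_aux_comm S hS a b
        exact Quotient.sound this }
  set π : FreeAlgebra F (Fin n) →ₐ[F] MvPolynomial (Fin n) F :=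
    FreeAlgebra.lift F MvPolynomial.X with hπ
  set φ : MvPolynomial (Fin n) F →+* c.Quotient :=
    MvPolynomial.eval₂Hom (c.mk'.comp (algebraMap F (FreeAlgebra F (Fin n))))
      (fun i => c.mk' (FreeAlgebra.ι F i)) with hφ
  have key : ∀ z : FreeAlgebra F (Fin n), φ (π z) = c.mk' z := by
    intro z
    induction z with
    | grade0 r =>
        rw [AlgHom.commutes]
        simp [hφ, MvPolynomial.algebraMap_eq]
    | grade1 i => simp [hφ, hπ]
    | mul a b ha hb => rw [map_mul, map_mul, ha, hb, map_mul]
    | add a b ha hb => rw [map_add, map_add, ha, hb, map_add]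
  have : c.mk' x = c.mk' 0 := by
    rw [← key x, hx, map_zero, map_zero]
  have hmem : c x 0 := Quotient.exact this
  rwa [I.mem_iff]

end Aux

/-- Completeness of NFPC: if a set `Q` of noncommutative polynomials has no common
`{0,1}`-root over the field `F` itself, then `1` lies in the two-sided ideal generated
by `Q`, the Boolean axioms `x_i⬝(1 - x_i)` and the commutator axioms `x_i⬝x_j - x_j⬝x_i`. -/
theorem nfpc_complete (F : Type*) [Field F] (n : ℕ)
    (Q : Set (FreeAlgebra F (Fin n)))
    (h : ¬ ∃ e : Fin n → F, (∀ i, e i = 0 ∨ e i = 1) ∧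
          ∀ q ∈ Q, FreeAlgebra.lift F e q = 0) :
    (1 : FreeAlgebra F (Fin n)) ∈
      TwoSidedIdeal.span
        (Q ∪ Set.range (fun i : Fin n =>
            FreeAlgebra.ι F i * (1 - FreeAlgebra.ι F i)) ∪
          {p | ∃ i j : Fin n, i ≠ j ∧
            p = FreeAlgebra.ι F i * FreeAlgebra.ι F j
                - FreeAlgebra.ι F j * FreeAlgebra.ι F i}) := by
  set S : Set (FreeAlgebra F (Fin n)) :=
    Q ∪ Set.range (fun i : Fin n =>
        FreeAlgebra.ι F i * (1 - FreeAlgebra.ι F i)) ∪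
      {p | ∃ i j : Fin n, i ≠ j ∧
        p = FreeAlgebra.ι F i * FreeAlgebra.ι F j
            - FreeAlgebra.ι F j * FreeAlgebra.ι F i} with hSdef
  set I := TwoSidedIdeal.span S with hI
  have hcommS : ∀ i j : Fin n,
      FreeAlgebra.ι F i * FreeAlgebra.ι F j - FreeAlgebra.ι F j * FreeAlgebra.ι F i ∈ I := by
    intro i j
    by_cases hij : i = j
    · subst hij; rw [sub_self]; exact I.zero_mem
    · exact TwoSidedIdeal.subset_span (Or.inr ⟨i, j, hij, rfl⟩)
  set π : FreeAlgebra F (Fin n) →ₐ[F] MvPolynomial (Fin n) F :=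
    FreeAlgebra.lift F MvPolynomial.X with hπ
  -- surjectivity of π
  have hsurj : Function.Surjective π := by
    intro p
    induction p using MvPolynomial.induction_on with
    | C a => exact ⟨algebraMap F _ a, by rw [AlgHom.commutes]; rfl⟩
    | add p q hp hq =>
        obtain ⟨x, rfl⟩ := hp; obtain ⟨y, rfl⟩ := hq
        exact ⟨x + y, map_add _ _ _⟩
    | mul_X p i hp =>
        obtain ⟨x, rfl⟩ := hp
        exact ⟨x * FreeAlgebra.ι F i, by rw [map_mul]; simp [hπ]⟩
  -- Step 1: 1 ∈ commutative ideal generated by π '' S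
  have h1 : (1 : MvPolynomial (Fin n) F) ∈ Ideal.span (π '' S) := by
    by_contra h1
    classical
    have hne : Ideal.span (π '' S) ≠ ⊤ := fun ht => h1 (ht ▸ Submodule.mem_top)
    obtain ⟨m, hm, hJm⟩ := Ideal.exists_le_maximal _ hne
    letI : Field (MvPolynomial (Fin n) F ⧸ m) := Ideal.Quotient.field m
    haveI : Nontrivial (MvPolynomial (Fin n) F ⧸ m) := inferInstance
    set ψ : MvPolynomial (Fin n) F →ₐ[F] MvPolynomial (Fin n) F ⧸ m :=
      Ideal.Quotient.mkₐ F m with hψ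
    have hmem0 : ∀ s ∈ S, ψ (π s) = 0 := by
      intro s hs
      rw [hψ]
      rw [Ideal.Quotient.mkₐ_eq_mk, Ideal.Quotient.eq_zero_iff_mem]
      exact hJm (Ideal.subset_span ⟨s, hs, rfl⟩)
    have hbool : ∀ i : Fin n, ψ (MvPolynomial.X i) = 0 ∨ ψ (MvPolynomial.X i) = 1 := by
      intro i
      have hb : ψ (π (FreeAlgebra.ι F i * (1 - FreeAlgebra.ι F i))) = 0 :=
        hmem0 _ (Or.inl (Or.inr ⟨i, rfl⟩))
      rw [map_mul, map_sub, map_one, map_mul, map_sub, map_one] at hb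
      simp only [hπ, FreeAlgebra.lift_ι_apply] at hb
      rcases mul_eq_zero.1 hb with h0 | h0
      · exact Or.inl h0
      · exact Or.inr (by linear_combination -h0)
    set e : Fin n → F := fun i => if ψ (MvPolynomial.X i) = 0 then 0 else 1 with he
    have heval : ∀ i, algebraMap F (MvPolynomial (Fin n) F ⧸ m) (e i) = ψ (MvPolynomial.X i) := by
      intro i
      rw [he]
      by_cases h0 : ψ (MvPolynomial.X i) = 0
      · simp [h0]
      · rcases hbool i with h1' | h1'
        · exact absurd h1' h0
        · simp [h0, h1']
    have hψeq : ψ = (Algebra.ofId F _).comp (MvPolynomial.aeval e) := by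
      apply MvPolynomial.algHom_ext
      intro i
      simp [Algebra.ofId_apply, heval i]
    have hE : ∀ q ∈ Q, FreeAlgebra.lift F e q = 0 := by
      intro q hq
      have h0 : ψ (π q) = 0 := hmem0 q (Or.inl (Or.inl hq))
      rw [hψeq] at h0
      simp only [AlgHom.comp_apply, Algebra.ofId_apply] at h0
      have hinj : Function.Injective (algebraMap F (MvPolynomial (Fin n) F ⧸ m)) :=
        RingHom.injective _
      have hz : MvPolynomial.aeval e (π q) = 0 := by
        apply hinj; rw [h0, map_zero]
      have hcomp : (MvPolynomial.aeval e).comp π = FreeAlgebra.lift F e := by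
        apply FreeAlgebra.hom_ext
        funext i
        simp [hπ]
      calc FreeAlgebra.lift F e q = ((MvPolynomial.aeval e).comp π) q := by rw [hcomp]
        _ = 0 := hz
    exact h (⟨e, fun i => by by_cases h0 : ψ (MvPolynomial.X i) = 0 <;> simp [he, h0], hE⟩)
  -- Step 2: lift the commutative certificate
  have hlift : ∀ p ∈ Ideal.span (π '' S), ∃ x ∈ I, π x = p := by
    intro p hp
    induction hp using Submodule.span_induction with
    | mem p hps =>
        obtain ⟨s, hs, rfl⟩ := hps
        exact ⟨s, TwoSidedIdeal.subset_span hs, rfl⟩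
    | zero => exact ⟨0, I.zero_mem, map_zero _⟩
    | add p q _ _ hp hq =>
        obtain ⟨x, hx, rfl⟩ := hp; obtain ⟨y, hy, rfl⟩ := hq
        exact ⟨x + y, I.add_mem hx hy, map_add _ _ _⟩
    | smul r p _ hp =>
        obtain ⟨x, hx, rfl⟩ := hp
        obtain ⟨r', hr'⟩ := hsurj r
        exact ⟨r' * x, I.mul_mem_left r' x hx, by rw [map_mul, hr', smul_eq_mul]⟩
  obtain ⟨x, hxI, hx1⟩ := hlift 1 h1
  have hker : (1 - x) ∈ I := by
    apply nfpc_aux_ker S hcommS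
    show π (1 - x) = 0
    rw [map_sub, map_one, hx1, sub_self]
  have := I.add_mem hxI hker
  rwa [add_sub_cancel] at this
end

section
/- Let F be a field, d >= 1, and work in the free associative F-algebra on 2d generators y_1,...,y_d, z_1,...,z_d. Let HARD_d be the noncommutative polynomial that is the sum, over all subsets S of {1,...,d}, of the word formed by the product of the y_i for i in S in increasing order of i, followed by the product of the z_j for j in the complement of S in increasing order of j. Then for all subsets S, T of {1,...,d} with |S| = k and |T| = d - k, the coefficient in HARD_d of the word obtained by concatenating the increasing enumeration of {y_i : i in S} with the increasing enumeration of {z_j : j in T} equals 1 if T is the complement of S in {1,...,d}, and equals 0 otherwise. In particular, the C(d,k) x C(d,k) matrix whose rows are indexed by size-k subsets S, whose columns are indexed by size-(d-k) subsets T, and whose (S,T) entry is this coefficient, is a permutation matrix. -/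
lemma aux_equiv_ι {F : Type*} [CommSemiring F] {X : Type*} (x : X) :
    FreeAlgebra.equivMonoidAlgebraFreeMonoid (FreeAlgebra.ι F x) =
      MonoidAlgebra.single (FreeMonoid.of x) 1 := by
  simp [FreeAlgebra.equivMonoidAlgebraFreeMonoid, MonoidAlgebra.of_apply]

lemma aux_equiv_prod {F : Type*} [CommSemiring F] {X : Type*} (l : List X) :
    FreeAlgebra.equivMonoidAlgebraFreeMonoid ((l.map (FreeAlgebra.ι F)).prod) =
      MonoidAlgebra.single (FreeMonoid.ofList l) 1 := by
  induction l with
  | nil => simp [MonoidAlgebra.one_def]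
  | cons a l ih =>
    rw [List.map_cons, List.prod_cons, map_mul, ih, aux_equiv_ι,
      MonoidAlgebra.single_mul_single, one_mul]
    rfl

lemma aux_fil_none {α β : Type*} (l : List α) :
    l.filterMap (fun _ => (none : Option β)) = [] := by
  induction l <;> simp [List.filterMap_cons, *]

lemma aux_word_inj {d : ℕ} {A B S T : Finset (Fin d)}
    (h : ((A.sort (· ≤ ·)).map Sum.inl ++ (B.sort (· ≤ ·)).map Sum.inr : List (Fin d ⊕ Fin d)) =
         (S.sort (· ≤ ·)).map Sum.inl ++ (T.sort (· ≤ ·)).map Sum.inr) :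
    A = S ∧ B = T := by
  have h1 : A.sort (· ≤ ·) = S.sort (· ≤ ·) := by
    have := congrArg (List.filterMap Sum.getLeft?) h
    simpa [List.filterMap_append, List.filterMap_map, Function.comp_def, Sum.getLeft?,
      aux_fil_none] using this
  have h2 : B.sort (· ≤ ·) = T.sort (· ≤ ·) := by
    have := congrArg (List.filterMap Sum.getRight?) h
    simpa [List.filterMap_append, List.filterMap_map, Function.comp_def, Sum.getRight?,
      aux_fil_none] using this
  constructor <;>
    · ext x
      rw [← Finset.mem_sort (α := Fin d) (· ≤ ·), ← Finset.mem_sort (α := Fin d) (· ≤ ·)]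
      first
      | rw [h1]
      | rw [h2]



/-- The coefficient of a noncommutative polynomial (element of the free associative algebra)
at a word, via the identification with the monoid algebra of the free monoid. -/
noncomputable def ncCoeff {F : Type*} [CommSemiring F] {X : Type*}
    (x : FreeAlgebra F X) (w : FreeMonoid X) : F :=
  (FreeAlgebra.equivMonoidAlgebraFreeMonoid x).coeff w

/-- The word consisting of the increasing enumeration of `{y_i : i ∈ S}` followed by the
increasing enumeration of `{z_j : j ∈ T}` (with `y` the left copy and `z` the right copy
of `Fin d`). -/
def ncWord {d : ℕ} (S T : Finset (Fin d)) : FreeMonoid (Fin d ⊕ Fin d) :=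
  FreeMonoid.ofList (((S.sort (· ≤ ·)).map Sum.inl) ++ ((T.sort (· ≤ ·)).map Sum.inr))

/-- Nisan's hard polynomial `HARD_d`: the ordered representative of `∏ i, (y_i + z_i)`,
i.e. the sum over all subsets `S ⊆ {1,…,d}` of the product of the `y_i, i ∈ S` in
increasing order followed by the product of the `z_j, j ∈ Sᶜ` in increasing order. -/
noncomputable def HARD (F : Type*) [Field F] (d : ℕ) : FreeAlgebra F (Fin d ⊕ Fin d) :=
  ∑ S : Finset (Fin d),
    ((S.sort (· ≤ ·)).map (fun i => FreeAlgebra.ι F (Sum.inl i : Fin d ⊕ Fin d))).prod *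
      ((Sᶜ.sort (· ≤ ·)).map (fun j => FreeAlgebra.ι F (Sum.inr j : Fin d ⊕ Fin d))).prod

lemma aux_ncCoeff_hard {F : Type*} [Field F] {d : ℕ} (S T : Finset (Fin d)) :
    ncCoeff (HARD F d) (ncWord S T) = if T = Sᶜ then 1 else 0 := by
  classical
  have hterm : ∀ A : Finset (Fin d),
      (FreeAlgebra.equivMonoidAlgebraFreeMonoid
        (((A.sort (· ≤ ·)).map (fun i => FreeAlgebra.ι F (Sum.inl i : Fin d ⊕ Fin d))).prod *
          ((Aᶜ.sort (· ≤ ·)).map (fun j => FreeAlgebra.ι F (Sum.inr j : Fin d ⊕ Fin d))).prod)) =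
      MonoidAlgebra.single (ncWord A Aᶜ) 1 := by
    intro A
    rw [map_mul]
    have l1 : ((A.sort (· ≤ ·)).map (fun i => FreeAlgebra.ι F (Sum.inl i : Fin d ⊕ Fin d))) =
        ((A.sort (· ≤ ·)).map Sum.inl).map (FreeAlgebra.ι F) := by
      rw [List.map_map]; rfl
    have l2 : ((Aᶜ.sort (· ≤ ·)).map (fun j => FreeAlgebra.ι F (Sum.inr j : Fin d ⊕ Fin d))) =
        ((Aᶜ.sort (· ≤ ·)).map Sum.inr).map (FreeAlgebra.ι F) := by
      rw [List.map_map]; rfl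
    rw [l1, l2, aux_equiv_prod, aux_equiv_prod, MonoidAlgebra.single_mul_single, one_mul]
    rfl
  have : ncCoeff (HARD F d) (ncWord S T) =
      ∑ A : Finset (Fin d), (MonoidAlgebra.single (ncWord A Aᶜ) (1:F)).coeff (ncWord S T) := by
    unfold ncCoeff HARD
    rw [map_sum]
    rw [MonoidAlgebra.coeff_sum, Finsupp.finset_sum_apply]
    exact Finset.sum_congr rfl fun A _ => by rw [hterm A]
  rw [this]
  rw [Finset.sum_eq_single S]
  · rw [MonoidAlgebra.coeff_single, Finsupp.single_apply]
    congr 1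
    simp only [eq_iff_iff]
    constructor
    · intro h
      have := aux_word_inj (congrArg FreeMonoid.toList h)
      exact this.2.symm
    · intro h; rw [h]
  · intro A _ hA
    rw [MonoidAlgebra.coeff_single, Finsupp.single_apply, if_neg]
    intro h
    exact hA (aux_word_inj (congrArg FreeMonoid.toList h)).1
  · intro h; exact absurd (Finset.mem_univ S) h

/-- The coefficient of `HARD_d` at the word given by a size-`k` subset `S` (of `y`'s) followed
by a size-`(d-k)` subset `T` (of `z`'s) is `1` if `T = Sᶜ` and `0` otherwise; in particular the
corresponding `C(d,k) × C(d,k)` matrix of coefficients is a permutation matrix. -/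
theorem hard_coeff_eq_ite (F : Type*) [Field F] (d : ℕ) (hd : 1 ≤ d)
    (k : ℕ) (hk : k ≤ d) :
    (∀ S T : Finset (Fin d), S.card = k → T.card = d - k →
        ncCoeff (HARD F d) (ncWord S T) = if T = Sᶜ then 1 else 0) ∧
      ∃ e : {S : Finset (Fin d) // S.card = k} ≃ {T : Finset (Fin d) // T.card = d - k},
        ∀ (S : {S : Finset (Fin d) // S.card = k})
          (T : {T : Finset (Fin d) // T.card = d - k}),
          ncCoeff (HARD F d) (ncWord S.1 T.1) = if T = e S then 1 else 0 := by
  constructor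
  · intro S T _ _
    exact aux_ncCoeff_hard S T
  · refine ⟨⟨fun S => ⟨S.1ᶜ, by simp [Finset.card_compl, S.2]⟩,
      fun T => ⟨T.1ᶜ, by
        simp [Finset.card_compl, T.2]
        omega⟩, fun S => by simp, fun T => by simp⟩, ?_⟩
    intro S T
    rw [aux_ncCoeff_hard]
    congr 1
    simp [Subtype.ext_iff, Equiv.coe_fn_mk]
end

section
/- Let F be a field, n >= 1 a natural number, and let a_0, a_1, ..., a_n be n+1 pairwise distinct elements of F. Then for every 0 <= k <= n there exist coefficients c_0, c_1, ..., c_n in F such that the elementary symmetric polynomial e_k(x_1,...,x_n) equals the sum over j = 0,...,n of c_j * prod_{i=1}^{n} (x_i + a_j), as polynomials in F[x_1,...,x_n]. -/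
open MvPolynomial

/-- Evaluation of the Vieta identity at a constant. -/
lemma prod_X_add_C_eq_sum_esymm_pow (F : Type*) [Field F] (n : ℕ) (t : F) :
    (∏ i : Fin n, (X i + C t)) =
      ∑ m : Fin (n + 1), C (t ^ (n - (m : ℕ))) * esymm (Fin n) F (m : ℕ) := by
  have h := congrArg (Polynomial.eval (C t : MvPolynomial (Fin n) F))
    (MvPolynomial.prod_C_add_X_eq_sum_esymm F (Fin n))
  rw [Fin.sum_univ_eq_sum_range (fun m => C (t ^ (n - m)) * esymm (Fin n) F m) (n + 1)]
  simp only [Polynomial.eval_prod, Polynomial.eval_finset_sum, Polynomial.eval_add,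
    Polynomial.eval_mul, Polynomial.eval_pow, Polynomial.eval_X, Polynomial.eval_C,
    Fintype.card_fin] at h
  have h2 : (∏ i : Fin n, (X i + C t)) = ∏ i : Fin n, ((C t : MvPolynomial (Fin n) F) + X i) :=
    Finset.prod_congr rfl fun i _ => add_comm _ _
  rw [h2, h]
  exact Finset.sum_congr rfl fun m _ => by rw [map_pow, mul_comm]

/-- Polynomial interpolation for elementary symmetric polynomials: given `n + 1` pairwise
distinct field elements `a_0, …, a_n`, every elementary symmetric polynomial
`e_k(x_1,…,x_n)` with `k ≤ n` is an `F`-linear combination of the `n + 1` products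
`∏ i, (x_i + a_j)`. -/
theorem esymm_eq_linear_combination_of_products (F : Type*) [Field F] (n : ℕ) (hn : 1 ≤ n)
    (a : Fin (n + 1) → F) (ha : Function.Injective a) (k : ℕ) (hk : k ≤ n) :
    ∃ c : Fin (n + 1) → F,
      esymm (Fin n) F k =
        ∑ j : Fin (n + 1), c j • ∏ i : Fin n, (X i + C (a j)) := by
  classical
  set M : Matrix (Fin (n + 1)) (Fin (n + 1)) F :=
    Matrix.of fun j m => a j ^ (n - (m : ℕ)) with hMdef
  have hMdet : M.det ≠ 0 := by
    have hsub : M = (Matrix.vandermonde a).submatrix id Fin.revPerm := by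
      ext j m
      simp [hMdef, Matrix.vandermonde, Fin.rev]
    have hV : (Matrix.vandermonde a).det ≠ 0 :=
      Matrix.det_vandermonde_ne_zero_iff.mpr ha
    rw [hsub, Matrix.det_permute']
    rcases Int.units_eq_one_or (Equiv.Perm.sign (Fin.revPerm : Equiv.Perm (Fin (n + 1))))
      with h | h <;> simp [h, hV]
  have hMunit : IsUnit M.det := isUnit_iff_ne_zero.mpr hMdet
  set k' : Fin (n + 1) := ⟨k, Nat.lt_succ_of_le hk⟩ with hk'
  refine ⟨fun j => M⁻¹ k' j, ?_⟩
  have hδ : ∀ m : Fin (n + 1),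
      (∑ j : Fin (n + 1), M⁻¹ k' j * a j ^ (n - (m : ℕ))) =
        if k' = m then 1 else 0 := by
    intro m
    have h1 : (M⁻¹ * M) k' m = ∑ j : Fin (n + 1), M⁻¹ k' j * a j ^ (n - (m : ℕ)) := by
      simp [Matrix.mul_apply, hMdef]
    rw [← h1, Matrix.nonsing_inv_mul M hMunit, Matrix.one_apply]
  calc esymm (Fin n) F k
      = ∑ m : Fin (n + 1), C (if k' = m then (1 : F) else 0) * esymm (Fin n) F (m : ℕ) := by
        rw [Finset.sum_eq_single k']
        · simp
          rfl
        · intro m _ hm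
          simp [Ne.symm hm]
        · simp
    _ = ∑ m : Fin (n + 1),
          C (∑ j : Fin (n + 1), M⁻¹ k' j * a j ^ (n - (m : ℕ))) * esymm (Fin n) F (m : ℕ) := by
        simp_rw [hδ]
    _ = ∑ j : Fin (n + 1), (M⁻¹ k' j) • ∏ i : Fin n, (X i + C (a j)) := by
        simp_rw [prod_X_add_C_eq_sum_esymm_pow F n, Finset.smul_sum, map_sum,
          Finset.sum_mul]
        rw [Finset.sum_comm]
        refine Finset.sum_congr rfl fun m _ => Finset.sum_congr rfl fun j _ => ?_
        rw [MvPolynomial.smul_eq_C_mul, map_mul, mul_assoc]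
end
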